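/- Let n be a natural number and let X and Y be finite sets (Finsets) of vectors in Fin n → ZMod 2 such that for every x ∈ X and every y ∈ Y the inner product ∑ i, x i * y i equals 1 in ZMod 2. Then X.card * Y.card ≤ 2^n. -/

import Mathlib

open LinearMap Module

theorem one_monochromatic_rectangle_card_le
    (n : ℕ) (X Y : Finset (Fin n → ZMod 2))
    (h : ∀ x ∈ X, ∀ y ∈ Y, ∑ i, x i * y i = (1 : ZMod 2)) :
    X.card * Y.card ≤ 2 ^ n := by
  rcases X.eq_empty_or_nonempty with rfl | ⟨x0, hx0⟩
  · simp
  let B : LinearMap.BilinForm (ZMod 2) (Fin n → ZMod 2) :=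
    LinearMap.mk₂ (ZMod 2) (fun x y => ∑ i, x i * y i)
      (by intro x x' y; simp [Pi.add_apply, add_mul, Finset.sum_add_distrib])
      (by intro c x y; simp [Pi.smul_apply, Finset.mul_sum, smul_eq_mul, mul_assoc])
      (by intro x y y'; simp [Pi.add_apply, mul_add, Finset.sum_add_distrib])
      (by intro c x y; simp [Pi.smul_apply, Finset.mul_sum, smul_eq_mul, mul_left_comm])
  have hBapp : ∀ x y : Fin n → ZMod 2, B x y = ∑ i, x i * y i := fun _ _ => rfl
  have hBsymm : ∀ x y : Fin n → ZMod 2, B x y = B y x := by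
    intro x y; simp [hBapp, mul_comm]
  have hBrefl : B.IsRefl := fun x y hxy => by rw [hBsymm]; exact hxy
  have hBnd : B.Nondegenerate := by
    refine ⟨fun x hx => ?_, fun x hx => ?_⟩ <;> funext i <;> have := hx (Pi.single i 1)
    · simpa [hBapp, Pi.single_apply, Finset.sum_ite_eq', mul_comm] using this
    · simpa [hBapp, Pi.single_apply, Finset.sum_ite_eq', Finset.sum_ite_eq, mul_comm] using this
  set W : Submodule (ZMod 2) (Fin n → ZMod 2) := Submodule.span (ZMod 2) (Y : Set _) with hW
  have hYW : ∀ y ∈ Y, y ∈ W := fun y hy => Submodule.subset_span hy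
  have hXorth : ∀ x ∈ X, x + x0 ∈ B.orthogonal W := by
    intro x hx w hw
    have hle : W ≤ LinearMap.ker (B.flip (x + x0)) := by
      rw [hW, Submodule.span_le]
      intro y hy
      simp only [SetLike.mem_coe, LinearMap.mem_ker, LinearMap.flip_apply]
      have h1 : B y x = 1 := by rw [hBapp]; simp only [mul_comm]; exact h x hx y hy
      have h2 : B y x0 = 1 := by rw [hBapp]; simp only [mul_comm]; exact h x0 hx0 y hy
      show B y (x + x0) = 0
      have hadd : B y (x + x0) = B y x + B y x0 := by simp
      rw [hadd, h1, h2]; decide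
    have := hle hw
    simpa [LinearMap.BilinForm.IsOrtho] using this
  letI : Fintype W := Fintype.ofFinite _
  letI : Fintype (B.orthogonal W) := Fintype.ofFinite _
  have hcardY : Y.card ≤ Fintype.card W := by
    rw [← Fintype.card_coe]
    exact Fintype.card_le_of_injective
      (fun y : {y // y ∈ Y} => (⟨y.1, hYW y.1 y.2⟩ : W))
      (fun a b hab => by apply Subtype.ext; have := congrArg Subtype.val hab; exact this)
  have hcardX : X.card ≤ Fintype.card (B.orthogonal W) := by
    rw [← Fintype.card_coe]
    exact Fintype.card_le_of_injective
      (fun x : {x // x ∈ X} => (⟨x.1 + x0, hXorth x.1 x.2⟩ : B.orthogonal W))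
      (fun a b hab => by
        apply Subtype.ext
        have : a.1 + x0 = b.1 + x0 := congrArg Subtype.val hab
        exact add_right_cancel this)
  have hV : Module.finrank (ZMod 2) (Fin n → ZMod 2) = n := by
    simp
  have hcW : Fintype.card W = 2 ^ Module.finrank (ZMod 2) W := by
    have := card_eq_pow_finrank (K := ZMod 2) (V := W)
    simpa [ZMod.card] using this
  have hcO : Fintype.card (B.orthogonal W) = 2 ^ (n - Module.finrank (ZMod 2) W) := by
    have := Module.card_eq_pow_finrank (K := ZMod 2) (V := B.orthogonal W)
    rw [this, ZMod.card, LinearMap.BilinForm.finrank_orthogonal hBnd W, hV]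
  have hrle : Module.finrank (ZMod 2) W ≤ n := by
    have := Submodule.finrank_le W
    rwa [hV] at this
  calc X.card * Y.card ≤ Fintype.card (B.orthogonal W) * Fintype.card W :=
        Nat.mul_le_mul hcardX hcardY
    _ = 2 ^ (n - Module.finrank (ZMod 2) W) * 2 ^ Module.finrank (ZMod 2) W := by
        rw [hcO, hcW]
    _ = 2 ^ n := by rw [← pow_add, Nat.sub_add_cancel hrle]
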